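/- Convergence condition for forward–backward with fixed Nesterov-like momentum: Let γ > 0, θ > 0, β₁ > 0, and set γ̂ = γ/(2β₁) and a = θ²γ̂ + θ(1 − γ̂). If 0 < 1 − 3θ − γ̂(θ − 1)², then the symmetric matrices Q = γ⁻¹[[1−θ, θ],[θ, a]] and W = γ⁻¹[[1−θ−γ̂−a, θ(1−γ̂)],[θ(1−γ̂), a−θ²γ̂]] are both positive definite. -/

import Mathlib

open Matrix

lemma posDef_fin2 (a b d : ℝ) (h1 : 0 < a) (h2 : 0 < a * d - b * b) :
    (!![a, b; b, d]).PosDef := by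
  rw [posDef_iff_dotProduct_mulVec]
  constructor
  · ext i j
    fin_cases i <;> fin_cases j <;> simp [Matrix.conjTranspose, vecHead, vecTail]
  · intro x hx
    have hx' : x 0 ≠ 0 ∨ x 1 ≠ 0 := by
      by_contra hc
      push_neg at hc
      exact hx (funext fun i => by fin_cases i <;> simp [hc.1, hc.2])
    simp [dotProduct, Fin.sum_univ_two, mulVec]
    have hd : 0 < d := by nlinarith [sq_nonneg b]
    rcases hx' with h0 | h0
    · nlinarith [sq_nonneg (b * x 0 + d * x 1), mul_pos h2 (pow_two_pos_of_ne_zero h0)]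
    · nlinarith [sq_nonneg (a * x 0 + b * x 1), mul_pos h2 (pow_two_pos_of_ne_zero h0)]

/-- Convergence condition for forward–backward splitting with fixed
Nesterov-like momentum: with `γ̂ = γ/(2β₁)` and `a = θ²γ̂ + θ(1 − γ̂)`, if
`0 < 1 − 3θ − γ̂(θ − 1)²` then both `Q = γ⁻¹[[1−θ, θ],[θ, a]]` and
`W = γ⁻¹[[1−θ−γ̂−a, θ(1−γ̂)],[θ(1−γ̂), a−θ²γ̂]]` are positive definite. -/
theorem stmt18 (γ θ β₁ : ℝ) (hγ : 0 < γ) (hθ : 0 < θ) (hβ : 0 < β₁)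
    (γhat a : ℝ) (hγhat : γhat = γ / (2 * β₁)) (ha : a = θ ^ 2 * γhat + θ * (1 - γhat))
    (h : 0 < 1 - 3 * θ - γhat * (θ - 1) ^ 2) :
    (γ⁻¹ • !![1 - θ, θ; θ, a]).PosDef ∧
    (γ⁻¹ • !![1 - θ - γhat - a, θ * (1 - γhat);
              θ * (1 - γhat), a - θ ^ 2 * γhat]).PosDef := by
  have hγi : 0 < γ⁻¹ := inv_pos.mpr hγ
  have hgh : 0 < γhat := by rw [hγhat]; positivity
  have hθlt : θ < 1/3 := by nlinarith [mul_nonneg hgh.le (sq_nonneg (θ - 1))]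
  have hgh1 : γhat < 1 := by nlinarith [sq_nonneg (θ - 1)]
  have hθg : 0 < θ * (1 - γhat) := mul_pos hθ (by linarith)
  have smul_eq : ∀ p q r : ℝ, γ⁻¹ • !![p, q; q, r] = !![γ⁻¹ * p, γ⁻¹ * q; γ⁻¹ * q, γ⁻¹ * r] := by
    intro p q r
    ext i j
    fin_cases i <;> fin_cases j <;> simp
  constructor
  · rw [smul_eq]
    apply posDef_fin2
    · exact mul_pos hγi (by linarith)
    · have hd : 0 < (1 - θ) * a - θ * θ := by nlinarith
      calc (0:ℝ) < γ⁻¹ * γ⁻¹ * ((1 - θ) * a - θ * θ) := by positivity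
        _ = γ⁻¹ * (1 - θ) * (γ⁻¹ * a) - γ⁻¹ * θ * (γ⁻¹ * θ) := by ring
  · rw [smul_eq]
    apply posDef_fin2
    · exact mul_pos hγi (by nlinarith)
    · have hd : 0 < (1 - θ - γhat - a) * (a - θ ^ 2 * γhat) - θ * (1 - γhat) * (θ * (1 - γhat)) := by
        nlinarith [mul_pos hθg h]
      calc (0:ℝ) < γ⁻¹ * γ⁻¹ * ((1 - θ - γhat - a) * (a - θ ^ 2 * γhat) - θ * (1 - γhat) * (θ * (1 - γhat))) := by positivity
        _ = γ⁻¹ * (1 - θ - γhat - a) * (γ⁻¹ * (a - θ ^ 2 * γhat)) - γ⁻¹ * (θ * (1 - γhat)) * (γ⁻¹ * (θ * (1 - γhat))) := by ring
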